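/- Let 1 ≤ k ≤ n be integers and let σ_k(λ) := e_k(λ)/C(n,k) denote the normalized k-th elementary symmetric polynomial of λ = (λ₁, …, λ_n), where e_k is the k-th elementary symmetric polynomial and C(n,k) the binomial coefficient, so that σ_k(1,…,1) = 1. Then for every λ ∈ ℝⁿ with all entries strictly positive: Σ_{i=1}^{n} λ_i² ∂σ_k/∂λ_i (λ) ≥ k σ_k(λ)^{(k+1)/k}. -/

import Mathlib

open Finset

theorem stmt_10 (n k : ℕ) (hk : 1 ≤ k) (hkn : k ≤ n)
    (l : Fin n → ℝ) (hl : ∀ i, 0 < l i) :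
    (k : ℝ) * ((∑ A ∈ powersetCard k (univ : Finset (Fin n)), ∏ i ∈ A, l i) /
        (n.choose k : ℝ)) ^ (((k : ℝ) + 1) / k) ≤
      ∑ i, l i ^ 2 *
        fderiv ℝ
          (fun m : Fin n → ℝ =>
            (∑ A ∈ powersetCard k (univ : Finset (Fin n)), ∏ j ∈ A, m j) / (n.choose k : ℝ))
          l (Pi.single i 1) := by
  classical
  set N : ℝ := (n.choose k : ℝ) with hNdef
  have hNpos : (0:ℝ) < N := by
    rw [hNdef]; exact_mod_cast Nat.choose_pos hkn
  set pc := powersetCard k (univ : Finset (Fin n)) with hpc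
  have hkpos : (0:ℝ) < (k:ℝ) := by exact_mod_cast hk
  -- Step 1: compute the derivative
  have hG : HasFDerivAt (fun m : Fin n → ℝ => (∑ A ∈ pc, ∏ j ∈ A, m j))
      (∑ A ∈ pc, ∑ j ∈ A, (∏ t ∈ A.erase j, l t) •
        (ContinuousLinearMap.proj j : (Fin n → ℝ) →L[ℝ] ℝ)) l := by
    apply HasFDerivAt.fun_sum
    intro A hA
    exact HasFDerivAt.finset_prod (fun j _ =>
      (ContinuousLinearMap.proj j : (Fin n → ℝ) →L[ℝ] ℝ).hasFDerivAt)
  have hF : HasFDerivAt (fun m : Fin n → ℝ => (∑ A ∈ pc, ∏ j ∈ A, m j) / N)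
      (N⁻¹ • (∑ A ∈ pc, ∑ j ∈ A, (∏ t ∈ A.erase j, l t) •
        (ContinuousLinearMap.proj j : (Fin n → ℝ) →L[ℝ] ℝ))) l := by
    simpa only [div_eq_mul_inv] using hG.mul_const N⁻¹
  have hderiv : ∀ i : Fin n,
      fderiv ℝ (fun m : Fin n → ℝ => (∑ A ∈ pc, ∏ j ∈ A, m j) / N) l (Pi.single i 1)
        = (∑ A ∈ pc, if i ∈ A then ∏ t ∈ A.erase i, l t else 0) / N := by
    intro i
    rw [hF.fderiv]
    simp only [ContinuousLinearMap.smul_apply, ContinuousLinearMap.coe_sum',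
      Finset.sum_apply, ContinuousLinearMap.coe_smul', Pi.smul_apply,
      ContinuousLinearMap.proj_apply, smul_eq_mul]
    rw [inv_mul_eq_div]
    congr 1
    refine Finset.sum_congr rfl fun A _ => ?_
    simp only [Pi.single_apply, mul_ite, mul_one, mul_zero]
    simp [Finset.sum_ite_eq' A i (fun j => ∏ t ∈ A.erase j, l t)]
  -- Step 2: rewrite RHS as (∑_A (∑_{i∈A} l i) * ∏_A l)/N
  have hRHS : ∑ i, l i ^ 2 *
        fderiv ℝ (fun m : Fin n → ℝ => (∑ A ∈ pc, ∏ j ∈ A, m j) / N) l (Pi.single i 1)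
      = (∑ A ∈ pc, (∑ i ∈ A, l i) * ∏ j ∈ A, l j) / N := by
    simp only [hderiv, ← mul_div_assoc]
    rw [← Finset.sum_div]
    congr 1
    calc ∑ x, l x ^ 2 * ∑ A ∈ pc, (if x ∈ A then ∏ t ∈ A.erase x, l t else 0)
        = ∑ x, ∑ A ∈ pc, (if x ∈ A then l x ^ 2 * ∏ t ∈ A.erase x, l t else 0) := by
          refine Finset.sum_congr rfl fun x _ => ?_
          rw [Finset.mul_sum]
          exact Finset.sum_congr rfl fun A _ => by rw [mul_ite, mul_zero]
      _ = ∑ A ∈ pc, ∑ x, (if x ∈ A then l x ^ 2 * ∏ t ∈ A.erase x, l t else 0) :=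
          Finset.sum_comm
      _ = ∑ A ∈ pc, (∑ i ∈ A, l i) * ∏ j ∈ A, l j := by
          refine Finset.sum_congr rfl fun A _ => ?_
          rw [Finset.sum_ite_mem, Finset.univ_inter, Finset.sum_mul]
          exact Finset.sum_congr rfl fun x hx => by
            rw [sq, mul_assoc, Finset.mul_prod_erase A l hx]
  rw [hRHS]
  -- Step 3: the inequality
  have hq : (1:ℝ) ≤ ((k:ℝ)+1)/k := by
    rw [le_div_iff₀ hkpos]; linarith
  have hppos : ∀ A ∈ pc, (0:ℝ) < ∏ j ∈ A, l j :=
    fun A _ => Finset.prod_pos (fun j _ => hl j)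
  -- per-A AM-GM
  have hAM : ∀ A ∈ pc, (k:ℝ) * (∏ j ∈ A, l j) ^ (((k:ℝ)+1)/k) ≤ (∑ i ∈ A, l i) * ∏ j ∈ A, l j := by
    intro A hA
    have hcard : A.card = k := (Finset.mem_powersetCard.mp hA).2
    have hgm : (∏ j ∈ A, l j) ^ ((k:ℝ)⁻¹) ≤ ∑ i ∈ A, (k:ℝ)⁻¹ * l i := by
      have h := Real.geom_mean_le_arith_mean_weighted A (fun _ => (k:ℝ)⁻¹) l
        (fun i _ => by positivity)
        (by rw [Finset.sum_const, hcard, nsmul_eq_mul]; field_simp)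
        (fun i _ => (hl i).le)
      rwa [Real.finset_prod_rpow A l (fun i _ => (hl i).le) ((k:ℝ)⁻¹)] at h
    have hsum : (k:ℝ) * ∑ i ∈ A, (k:ℝ)⁻¹ * l i = ∑ i ∈ A, l i := by
      rw [Finset.mul_sum]
      exact Finset.sum_congr rfl fun i _ => by field_simp
    have hpA := hppos A hA
    have hsplit : (∏ j ∈ A, l j) ^ (((k:ℝ)+1)/k)
        = (∏ j ∈ A, l j) ^ ((k:ℝ)⁻¹) * ∏ j ∈ A, l j := by
      have : ((k:ℝ)+1)/k = (k:ℝ)⁻¹ + 1 := by field_simp; ring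
      rw [this, Real.rpow_add hpA, Real.rpow_one]
    rw [hsplit, ← hsum]
    rw [← mul_assoc]
    exact mul_le_mul_of_nonneg_right
      (mul_le_mul_of_nonneg_left hgm hkpos.le) hpA.le
  -- convexity (power mean)
  have hcardpc : ((pc.card : ℕ) : ℝ) = N := by
    rw [hpc, Finset.card_powersetCard, Finset.card_univ, Fintype.card_fin, hNdef]
  have hconv := Real.rpow_arith_mean_le_arith_mean_rpow pc (fun _ => N⁻¹)
    (fun A => ∏ j ∈ A, l j)
    (fun _ _ => by positivity)
    (by rw [Finset.sum_const, nsmul_eq_mul, hcardpc]; field_simp)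
    (fun A hA => (hppos A hA).le) hq
  have hmean : ((∑ A ∈ pc, ∏ j ∈ A, l j) / N) ^ (((k:ℝ)+1)/k)
      ≤ N⁻¹ * ∑ A ∈ pc, (∏ j ∈ A, l j) ^ (((k:ℝ)+1)/k) := by
    have h1 : ∑ A ∈ pc, N⁻¹ * ∏ j ∈ A, l j = (∑ A ∈ pc, ∏ j ∈ A, l j) / N := by
      rw [← Finset.mul_sum, inv_mul_eq_div]
    have h2 : ∑ A ∈ pc, N⁻¹ * (∏ j ∈ A, l j) ^ (((k:ℝ)+1)/k)
        = N⁻¹ * ∑ A ∈ pc, (∏ j ∈ A, l j) ^ (((k:ℝ)+1)/k) := by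
      rw [Finset.mul_sum]
    rw [← h1, ← h2]
    exact hconv
  calc (k:ℝ) * ((∑ A ∈ pc, ∏ j ∈ A, l j) / N) ^ (((k:ℝ)+1)/k)
      ≤ (k:ℝ) * (N⁻¹ * ∑ A ∈ pc, (∏ j ∈ A, l j) ^ (((k:ℝ)+1)/k)) :=
        mul_le_mul_of_nonneg_left hmean hkpos.le
    _ = N⁻¹ * ∑ A ∈ pc, (k:ℝ) * (∏ j ∈ A, l j) ^ (((k:ℝ)+1)/k) := by
        simp only [Finset.mul_sum]
        exact Finset.sum_congr rfl fun A _ => by ring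
    _ ≤ N⁻¹ * ∑ A ∈ pc, (∑ i ∈ A, l i) * ∏ j ∈ A, l j := by
        exact mul_le_mul_of_nonneg_left (Finset.sum_le_sum hAM) (by positivity)
    _ = (∑ A ∈ pc, (∑ i ∈ A, l i) * ∏ j ∈ A, l j) / N := by
        rw [inv_mul_eq_div]
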